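/- Let I = 3, J = 2, G_1 = {1,2}, G_2 = {1,3}, and h_1(x) = (x+2)⁺, h_2(x) = (x+1)⁺, h_3(x) = 5x⁺. Then the ⪕-greatest element F(t) = (F_1(t), F_2(t), F_3(t)) of A_t is given by: F_1(t) = t − 2, F_2(t) = −1, F_3(t) = 0 for 0 ≤ t ≤ 1; F_1(t) = F_2(t) = (t−3)/2, F_3(t) = (t−1)/10 for 1 ≤ t ≤ 7/2; and F_1(t) = F_3(t) = t/6 − 1/3, F_2(t) = 5t/6 − 8/3 for t ≥ 7/2. In particular, F is continuous and nondecreasing on [0,∞). -/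

import Mathlib

/-- The set of indices at which `a` attains its minimum. -/
noncomputable def argminSet {n : ℕ} (a : Fin n → ℝ) : Finset (Fin n) :=
  Finset.univ.filter (fun i => ∀ j, a i ≤ a j)

/-- The minimum entry of `a`. -/
noncomputable def minval {n : ℕ} (a : Fin n → ℝ) : ℝ := ⨅ i, a i

/-- The restriction of `a` to the indices in `S`, reindexed by `Fin S.card`
in increasing order. -/
noncomputable def restrictVec {n : ℕ} (S : Finset (Fin n)) (a : Fin n → ℝ) :
    Fin S.card → ℝ :=
  fun i => a (S.orderIsoOfFin rfl i).1

/-- The "min-sensitive" partial order `⪕` on `ℝⁿ` (Definition 1 of the paper):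
for `n = 1` it is the usual order; for `n ≥ 2`, `a ⪕ b` iff (i) `a = b`, or
(ii) `min a < min b`, or (iii) `min a = min b` and `Argmin b ⊊ Argmin a`, or
(iv) `min a = min b`, `Argmin a = Argmin b ⊊ {1,...,n}` and the restrictions
of `a` and `b` to the complement of the common argmin set are related. -/
noncomputable def msLE : (n : ℕ) → (Fin n → ℝ) → (Fin n → ℝ) → Prop
  | 0, _, _ => True
  | 1, a, b => a 0 ≤ b 0
  | n + 2, a, b =>
    a = b ∨
    minval a < minval b ∨
    (minval a = minval b ∧ argminSet b ⊂ argminSet a) ∨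
    (minval a = minval b ∧ argminSet a = argminSet b ∧ argminSet a ⊂ Finset.univ ∧
      msLE ((argminSet a)ᶜ).card (restrictVec (argminSet a)ᶜ a) (restrictVec (argminSet a)ᶜ b))
termination_by n => n
decreasing_by
  have hne : (argminSet a).Nonempty := by
    obtain ⟨i, -, hi⟩ := Finset.exists_min_image Finset.univ a ⟨0, Finset.mem_univ 0⟩
    refine ⟨i, ?_⟩
    unfold argminSet
    exact Finset.mem_filter.mpr ⟨Finset.mem_univ i, fun j => hi j (Finset.mem_univ j)⟩
  have h1 : 0 < (argminSet a).card := Finset.card_pos.mpr hne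
  have h2 : ((argminSet a)ᶜ).card = Fintype.card (Fin (n + 2)) - (argminSet a).card :=
    Finset.card_compl _
  simp only [Fintype.card_fin] at h2
  omega

/-- `x*_i`: the supremum of the zero set of a function. -/
noncomputable def xstar (f : ℝ → ℝ) : ℝ := sSup {x | f x = 0}

/-- The admissible set `A_t`. -/
def admissible (I J : ℕ) (h : Fin I → ℝ → ℝ) (G : Fin J → Finset (Fin I)) (t : ℝ) :
    Set (Fin I → ℝ) :=
  {a | (∀ i, a i ≤ t) ∧ ∀ j, (∑ i ∈ G j, h i (a i)) ≤ t}

/-- `F` is the `⪕`-greatest element of `A_t`. -/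
def IsGreatestMS (I J : ℕ) (h : Fin I → ℝ → ℝ) (G : Fin J → Finset (Fin I)) (t : ℝ)
    (F : Fin I → ℝ) : Prop :=
  F ∈ admissible I J h G t ∧ ∀ a ∈ admissible I J h G t, msLE I a F

/-- The resource sets of Example 2 of the paper: `G_1 = {1,2}`, `G_2 = {1,3}`
(indices shifted down by one). -/
def G17 : Fin 2 → Finset (Fin 3)
  | 0 => {0, 1}
  | 1 => {0, 2}

/-- The functions `h₁(x) = (x+2)⁺`, `h₂(x) = (x+1)⁺`, `h₃(x) = 5x⁺` of Example 2. -/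
noncomputable def h17 : Fin 3 → ℝ → ℝ
  | 0 => fun x => max (x + 2) 0
  | 1 => fun x => max (x + 1) 0
  | 2 => fun x => 5 * max x 0

section Helpers

lemma minval_le {n : ℕ} (a : Fin n → ℝ) (i : Fin n) : minval a ≤ a i := by
  have : Nonempty (Fin n) := ⟨i⟩
  exact ciInf_le (Finite.bddBelow_range a) i

lemma mem_argmin_iff {n : ℕ} {a : Fin n → ℝ} {i : Fin n} :
    i ∈ argminSet a ↔ a i = minval a := by
  unfold argminSet
  rw [Finset.mem_filter]
  have : Nonempty (Fin n) := ⟨i⟩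
  constructor
  · rintro ⟨-, h⟩
    exact le_antisymm (le_ciInf h) (minval_le a i)
  · intro h
    exact ⟨Finset.mem_univ i, fun j => h ▸ minval_le a j⟩

lemma minval3 (a : Fin 3 → ℝ) : minval a = min (a 0) (min (a 1) (a 2)) := by
  apply le_antisymm
  · exact le_min (minval_le a 0) (le_min (minval_le a 1) (minval_le a 2))
  · unfold minval
    apply le_ciInf; intro i; fin_cases i <;> simp [min_le_of_left_le, le_refl]

lemma minval2 (a : Fin 2 → ℝ) : minval a = min (a 0) (a 1) := by
  apply le_antisymm
  · exact le_min (minval_le a 0) (minval_le a 1)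
  · unfold minval
    apply le_ciInf; intro i; fin_cases i <;> simp

lemma restrict_singleton3 (k : Fin 3) (a : Fin 3 → ℝ) (i : Fin ({k} : Finset (Fin 3)).card) :
    restrictVec {k} a i = a k := by
  unfold restrictVec
  congr 1
  exact Finset.mem_singleton.mp (({k} : Finset (Fin 3)).orderIsoOfFin rfl i).2

lemma restrict_singleton2 (k : Fin 2) (a : Fin 2 → ℝ) (i : Fin ({k} : Finset (Fin 2)).card) :
    restrictVec {k} a i = a k := by
  unfold restrictVec
  congr 1
  exact Finset.mem_singleton.mp (({k} : Finset (Fin 2)).orderIsoOfFin rfl i).2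

lemma restrict_pair12 (a : Fin 3 → ℝ) :
    restrictVec ({1, 2} : Finset (Fin 3)) a ⟨0, by decide⟩ = a 1 ∧
    restrictVec ({1, 2} : Finset (Fin 3)) a ⟨1, by decide⟩ = a 2 := by
  unfold restrictVec
  set e := (({1, 2} : Finset (Fin 3)).orderIsoOfFin rfl) with he
  have m0 := (e ⟨0, by decide⟩).2
  have m1 := (e ⟨1, by decide⟩).2
  simp only [Finset.mem_insert, Finset.mem_singleton] at m0 m1
  have hlt : (e ⟨0, by decide⟩ : Fin 3) < (e ⟨1, by decide⟩ : Fin 3) := by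
    have := e.strictMono (show (⟨0, by decide⟩ : Fin ({1,2} : Finset (Fin 3)).card) < ⟨1, by decide⟩ by decide)
    exact_mod_cast this
  rcases m0 with m0 | m0 <;> rcases m1 with m1 | m1 <;>
    rw [m0, m1] at hlt ⊢ <;> first | exact ⟨rfl, rfl⟩ | (exfalso; exact absurd hlt (by decide))

lemma admissible_iff {t : ℝ} {b : Fin 3 → ℝ} :
    b ∈ admissible 3 2 h17 G17 t ↔ (∀ i, b i ≤ t) ∧
      max (b 0 + 2) 0 + max (b 1 + 1) 0 ≤ t ∧
      max (b 0 + 2) 0 + 5 * max (b 2) 0 ≤ t := by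
  unfold admissible
  rw [Set.mem_setOf_eq, Fin.forall_fin_two]
  rw [show G17 0 = {0,1} from rfl, show G17 1 = {0,2} from rfl,
    Finset.sum_pair (by decide), Finset.sum_pair (by decide)]
  simp only [h17]

end Helpers

lemma uniq2 (t : ℝ) (h1 : 1 ≤ t) (h2 : t < 7/2) (b : Fin 3 → ℝ)
    (hb : b ∈ admissible 3 2 h17 G17 t)
    (hle : msLE 3 ![(t-3)/2, (t-3)/2, (t-1)/10] b) :
    b = ![(t-3)/2, (t-3)/2, (t-1)/10] := by
  set c : Fin 3 → ℝ := ![(t-3)/2, (t-3)/2, (t-1)/10] with hc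
  obtain ⟨hbt, hC1, hC2⟩ := admissible_iff.mp hb
  have M0 : b 0 + 2 ≤ max (b 0 + 2) 0 := le_max_left _ _
  have M0' : (0:ℝ) ≤ max (b 0 + 2) 0 := le_max_right _ _
  have M1 : b 1 + 1 ≤ max (b 1 + 1) 0 := le_max_left _ _
  have M1' : (0:ℝ) ≤ max (b 1 + 1) 0 := le_max_right _ _
  have M2 : b 2 ≤ max (b 2) 0 := le_max_left _ _
  have M2' : (0:ℝ) ≤ max (b 2) 0 := le_max_right _ _
  have e0 : c 0 = (t-3)/2 := rfl
  have e1 : c 1 = (t-3)/2 := rfl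
  have e2 : c 2 = (t-1)/10 := rfl
  have hmv : minval c = (t-3)/2 := by
    rw [minval3, e0, e1, e2, min_eq_left (show (t-3)/2 ≤ (t-1)/10 by linarith), min_self]
  have hargmin : argminSet c = {0, 1} := by
    ext i
    rw [mem_argmin_iff, hmv]
    fin_cases i
    · simpa using e0
    · simpa using e1
    · show c 2 = (t-3)/2 ↔ (2 : Fin 3) ∈ ({0,1} : Finset (Fin 3))
      constructor
      · intro h; rw [e2] at h; exfalso; linarith
      · intro h; exact absurd h (by decide)
  rw [msLE] at hle
  rcases hle with hle | hle | ⟨hm, hsub⟩ | ⟨hm, heq, -, hrec⟩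
  · exact hle.symm
  · exfalso
    rw [hmv] at hle
    have l0 := lt_of_lt_of_le hle (minval_le b 0)
    have l1 := lt_of_lt_of_le hle (minval_le b 1)
    linarith
  · exfalso
    rw [hmv] at hm
    obtain ⟨j, hjc, hjb⟩ := Finset.exists_of_ssubset hsub
    rw [hargmin] at hjc
    rw [mem_argmin_iff] at hjb
    have hj : minval b < b j := lt_of_le_of_ne (minval_le b j) (Ne.symm hjb)
    have l0 := hm ▸ minval_le b 0
    have l1 := hm ▸ minval_le b 1
    rcases Finset.mem_insert.mp hjc with h | h
    · subst h; rw [← hm] at hj; linarith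
    · rw [Finset.mem_singleton] at h; subst h; rw [← hm] at hj; linarith
  · rw [hmv] at hm
    rw [hargmin] at heq hrec
    have hb0 : b 0 = minval b :=
      mem_argmin_iff.mp (heq ▸ (show (0:Fin 3) ∈ ({0,1} : Finset (Fin 3)) by decide))
    have hb1 : b 1 = minval b :=
      mem_argmin_iff.mp (heq ▸ (show (1:Fin 3) ∈ ({0,1} : Finset (Fin 3)) by decide))
    rw [show (({0,1} : Finset (Fin 3)))ᶜ = {2} by decide] at hrec
    have hrec' : msLE 1 (restrictVec ({2} : Finset (Fin 3)) c) (restrictVec {2} b) := hrec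
    replace hrec' := (msLE.eq_2 _ _).mp hrec'
    replace hrec' : c 2 ≤ b 2 := by
      rw [← restrict_singleton3 2 c ⟨0, by simp⟩, ← restrict_singleton3 2 b ⟨0, by simp⟩]; exact hrec'
    rw [e2] at hrec'
    have hub : b 2 ≤ (t-1)/10 := by linarith [hb0, hm]
    funext i
    fin_cases i
    · show b 0 = c 0; rw [e0, hb0, ← hm]
    · show b 1 = c 1; rw [e1, hb1, ← hm]
    · show b 2 = c 2; rw [e2]; linarith

lemma uniq3 (t : ℝ) (h1 : 7/2 ≤ t) (b : Fin 3 → ℝ)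
    (hb : b ∈ admissible 3 2 h17 G17 t)
    (hle : msLE 3 ![t/6 - 1/3, 5*t/6 - 8/3, t/6 - 1/3] b) :
    b = ![t/6 - 1/3, 5*t/6 - 8/3, t/6 - 1/3] := by
  set c : Fin 3 → ℝ := ![t/6 - 1/3, 5*t/6 - 8/3, t/6 - 1/3] with hc
  obtain ⟨hbt, hC1, hC2⟩ := admissible_iff.mp hb
  have M0 : b 0 + 2 ≤ max (b 0 + 2) 0 := le_max_left _ _
  have M0' : (0:ℝ) ≤ max (b 0 + 2) 0 := le_max_right _ _
  have M1 : b 1 + 1 ≤ max (b 1 + 1) 0 := le_max_left _ _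
  have M1' : (0:ℝ) ≤ max (b 1 + 1) 0 := le_max_right _ _
  have M2 : b 2 ≤ max (b 2) 0 := le_max_left _ _
  have M2' : (0:ℝ) ≤ max (b 2) 0 := le_max_right _ _
  have e0 : c 0 = t/6 - 1/3 := rfl
  have e1 : c 1 = 5*t/6 - 8/3 := rfl
  have e2 : c 2 = t/6 - 1/3 := rfl
  have hmv : minval c = t/6 - 1/3 := by
    rw [minval3, e0, e1, e2, min_eq_right (show t/6 - 1/3 ≤ 5*t/6 - 8/3 by linarith),
      min_self]
  rcases eq_or_lt_of_le h1 with ht | ht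
  · -- t = 7/2 : all three entries equal, argmin is univ
    have hall : c 1 = t/6 - 1/3 := by rw [e1]; linarith
    have hargmin : argminSet c = Finset.univ := by
      ext i
      simp only [Finset.mem_univ, iff_true, mem_argmin_iff, hmv]
      fin_cases i
      · exact e0
      · exact hall
      · exact e2
    rw [msLE] at hle
    rcases hle with hle | hle | ⟨hm, hsub⟩ | ⟨-, -, hssu, -⟩
    · exact hle.symm
    · exfalso
      rw [hmv] at hle
      have l0 := lt_of_lt_of_le hle (minval_le b 0)
      have l2 := lt_of_lt_of_le hle (minval_le b 2)
      linarith
    · rw [hmv] at hm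
      have l0 := hm ▸ minval_le b 0
      have l1 := hm ▸ minval_le b 1
      have l2 := hm ▸ minval_le b 2
      have hb0 : b 0 = t/6 - 1/3 := by linarith
      have hb1 : b 1 = t/6 - 1/3 := by nlinarith [hb0]
      have hb2 : b 2 = t/6 - 1/3 := by nlinarith [hb0]
      funext i
      fin_cases i
      · show b 0 = c 0; rw [e0, hb0]
      · show b 1 = c 1; rw [hall, hb1]
      · show b 2 = c 2; rw [e2, hb2]
    · exfalso
      rw [hargmin] at hssu
      exact (lt_irrefl _ hssu)
  · -- t > 7/2 : argmin = {0, 2}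
    have hargmin : argminSet c = {0, 2} := by
      ext i
      rw [mem_argmin_iff, hmv]
      fin_cases i
      · simpa using e0
      · show c 1 = t/6 - 1/3 ↔ (1 : Fin 3) ∈ ({0,2} : Finset (Fin 3))
        constructor
        · intro h; rw [e1] at h; exfalso; linarith
        · intro h; exact absurd h (by decide)
      · simpa using e2
    rw [msLE] at hle
    rcases hle with hle | hle | ⟨hm, hsub⟩ | ⟨hm, heq, -, hrec⟩
    · exact hle.symm
    · exfalso
      rw [hmv] at hle
      have l0 := lt_of_lt_of_le hle (minval_le b 0)
      have l2 := lt_of_lt_of_le hle (minval_le b 2)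
      linarith
    · exfalso
      rw [hmv] at hm
      obtain ⟨j, hjc, hjb⟩ := Finset.exists_of_ssubset hsub
      rw [hargmin] at hjc
      rw [mem_argmin_iff] at hjb
      have hj : minval b < b j := lt_of_le_of_ne (minval_le b j) (Ne.symm hjb)
      have l0 := hm ▸ minval_le b 0
      have l2 := hm ▸ minval_le b 2
      rcases Finset.mem_insert.mp hjc with h | h
      · subst h; rw [← hm] at hj; linarith
      · rw [Finset.mem_singleton] at h; subst h; rw [← hm] at hj; linarith
    · rw [hmv] at hm
      rw [hargmin] at heq hrec
      have hb0 : b 0 = minval b :=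
        mem_argmin_iff.mp (heq ▸ (show (0:Fin 3) ∈ ({0,2} : Finset (Fin 3)) by decide))
      have hb2 : b 2 = minval b :=
        mem_argmin_iff.mp (heq ▸ (show (2:Fin 3) ∈ ({0,2} : Finset (Fin 3)) by decide))
      rw [show (({0,2} : Finset (Fin 3)))ᶜ = {1} by decide] at hrec
      have hrec' : msLE 1 (restrictVec ({1} : Finset (Fin 3)) c) (restrictVec {1} b) := hrec
      replace hrec' := (msLE.eq_2 _ _).mp hrec'
      replace hrec' : c 1 ≤ b 1 := by
        rw [← restrict_singleton3 1 c ⟨0, by simp⟩, ← restrict_singleton3 1 b ⟨0, by simp⟩]; exact hrec'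
      rw [e1] at hrec'
      have hub : b 1 ≤ 5*t/6 - 8/3 := by linarith [hb0, hm]
      funext i
      fin_cases i
      · show b 0 = c 0; rw [e0, hb0, ← hm]
      · show b 1 = c 1; rw [e1]; linarith
      · show b 2 = c 2; rw [e2, hb2, ← hm]

lemma argmin_nonempty {n : ℕ} (a : Fin (n+1) → ℝ) : (argminSet a).Nonempty := by
  obtain ⟨i, -, hi⟩ := Finset.exists_min_image Finset.univ a ⟨0, Finset.mem_univ 0⟩
  exact ⟨i, Finset.mem_filter.mpr ⟨Finset.mem_univ i, fun j => hi j (Finset.mem_univ j)⟩⟩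

lemma restrict_pair12' (a : Fin 3 → ℝ) :
    (restrictVec ({1, 2} : Finset (Fin 3)) a : Fin 2 → ℝ) = ![a 1, a 2] := by
  funext i
  fin_cases i
  · exact (restrict_pair12 a).1
  · exact (restrict_pair12 a).2

lemma uniq1 (t : ℝ) (h0 : 0 ≤ t) (h1 : t < 1) (b : Fin 3 → ℝ)
    (hb : b ∈ admissible 3 2 h17 G17 t)
    (hle : msLE 3 ![t - 2, -1, 0] b) :
    b = ![t - 2, -1, 0] := by
  set c : Fin 3 → ℝ := ![t - 2, -1, 0] with hc
  obtain ⟨hbt, hC1, hC2⟩ := admissible_iff.mp hb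
  have M0 : b 0 + 2 ≤ max (b 0 + 2) 0 := le_max_left _ _
  have M0' : (0:ℝ) ≤ max (b 0 + 2) 0 := le_max_right _ _
  have M1 : b 1 + 1 ≤ max (b 1 + 1) 0 := le_max_left _ _
  have M1' : (0:ℝ) ≤ max (b 1 + 1) 0 := le_max_right _ _
  have M2 : b 2 ≤ max (b 2) 0 := le_max_left _ _
  have M2' : (0:ℝ) ≤ max (b 2) 0 := le_max_right _ _
  have e0 : c 0 = t - 2 := rfl
  have e1 : c 1 = -1 := rfl
  have e2 : c 2 = (0:ℝ) := rfl
  have hmv : minval c = t - 2 := by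
    rw [minval3, e0, e1, e2, min_eq_left (show (-1:ℝ) ≤ 0 by norm_num),
      min_eq_left (show t - 2 ≤ -1 by linarith)]
  have hargmin : argminSet c = {0} := by
    ext i
    rw [mem_argmin_iff, hmv]
    fin_cases i
    · simpa using e0
    · show c 1 = t - 2 ↔ (1 : Fin 3) ∈ ({0} : Finset (Fin 3))
      constructor
      · intro h; rw [e1] at h; exfalso; linarith
      · intro h; exact absurd h (by decide)
    · show c 2 = t - 2 ↔ (2 : Fin 3) ∈ ({0} : Finset (Fin 3))
      constructor
      · intro h; rw [e2] at h; exfalso; linarith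
      · intro h; exact absurd h (by decide)
  rw [msLE] at hle
  rcases hle with hle | hle | ⟨hm, hsub⟩ | ⟨hm, heq, -, hrec⟩
  · exact hle.symm
  · exfalso
    rw [hmv] at hle
    have l0 := lt_of_lt_of_le hle (minval_le b 0)
    linarith
  · exfalso
    rw [hargmin] at hsub
    obtain ⟨i, hi⟩ := argmin_nonempty b
    have hi0 : i = 0 := Finset.mem_singleton.mp (hsub.subset hi)
    obtain ⟨j, hjc, hjb⟩ := Finset.exists_of_ssubset hsub
    rw [Finset.mem_singleton] at hjc
    exact hjb (hjc ▸ hi0 ▸ hi)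
  · rw [hmv] at hm
    rw [hargmin] at heq hrec
    have hb0 : b 0 = minval b :=
      mem_argmin_iff.mp (heq ▸ (show (0:Fin 3) ∈ ({0} : Finset (Fin 3)) by decide))
    have hb0' : b 0 = t - 2 := by rw [hb0, ← hm]
    have hub1 : b 1 ≤ -1 := by linarith
    have hub2 : b 2 ≤ 0 := by linarith
    rw [show (({0} : Finset (Fin 3)))ᶜ = {1,2} by decide] at hrec
    have h2 : msLE 2 (restrictVec ({1,2} : Finset (Fin 3)) c)
        (restrictVec ({1,2} : Finset (Fin 3)) b) := hrec
    rw [restrict_pair12', restrict_pair12'] at h2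
    rw [e1, e2] at h2
    set v : Fin 2 → ℝ := ![b 1, b 2] with hv
    have ev0 : v 0 = b 1 := rfl
    have ev1 : v 1 = b 2 := rfl
    have hmu : minval ![(-1:ℝ), 0] = -1 := by
      rw [minval2]
      show min (-1:ℝ) 0 = -1
      norm_num
    have hargu : argminSet ![(-1:ℝ), 0] = {0} := by
      ext i
      rw [mem_argmin_iff, hmu]
      fin_cases i
      · simp
      · show (![(-1:ℝ), 0]) 1 = -1 ↔ (1 : Fin 2) ∈ ({0} : Finset (Fin 2))
        constructor
        · intro h; exfalso; norm_num at h
        · intro h; exact absurd h (by decide)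
    have hb12 : b 1 = -1 ∧ b 2 = 0 := by
      rw [msLE] at h2
      rcases h2 with h2 | h2 | ⟨hm2, hsub2⟩ | ⟨hm2, heq2, -, hrec2⟩
      · constructor
        · rw [← ev0, ← h2]; rfl
        · rw [← ev1, ← h2]; rfl
      · exfalso
        rw [hmu] at h2
        have := lt_of_lt_of_le h2 (minval_le v 0)
        rw [ev0] at this
        linarith
      · exfalso
        rw [hargu] at hsub2
        obtain ⟨i, hi⟩ := argmin_nonempty v
        have hi0 : i = 0 := Finset.mem_singleton.mp (hsub2.subset hi)
        obtain ⟨j, hjc, hjb⟩ := Finset.exists_of_ssubset hsub2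
        rw [Finset.mem_singleton] at hjc
        exact hjb (hjc ▸ hi0 ▸ hi)
      · rw [hmu] at hm2
        rw [hargu] at heq2 hrec2
        have hv0 : v 0 = minval v :=
          mem_argmin_iff.mp (heq2 ▸ (show (0:Fin 2) ∈ ({0} : Finset (Fin 2)) by decide))
        rw [show (({0} : Finset (Fin 2)))ᶜ = {1} by decide] at hrec2
        have hrec2' : msLE 1 (restrictVec ({1} : Finset (Fin 2)) ![(-1:ℝ), 0])
            (restrictVec ({1} : Finset (Fin 2)) v) := hrec2
        replace hrec2' := (msLE.eq_2 _ _).mp hrec2'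
        replace hrec2' : (![(-1:ℝ), 0]) 1 ≤ v 1 := by
          rw [← restrict_singleton2 1 ![(-1:ℝ), 0] ⟨0, by simp⟩, ← restrict_singleton2 1 v ⟨0, by simp⟩]; exact hrec2'
        have hu1 : (![(-1:ℝ), 0]) 1 = 0 := rfl
        rw [hu1, ev1] at hrec2'
        constructor
        · rw [← ev0, hv0, ← hm2]
        · linarith
    funext i
    fin_cases i
    · show b 0 = c 0; rw [e0, hb0']
    · show b 1 = c 1; rw [e1, hb12.1]
    · show b 2 = c 2; rw [e2, hb12.2]

lemma mem1 (t : ℝ) (h0 : 0 ≤ t) (h1 : t ≤ 1) :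
    ![t - 2, -1, 0] ∈ admissible 3 2 h17 G17 t := by
  rw [admissible_iff]
  refine ⟨?_, ?_, ?_⟩
  · intro i; fin_cases i
    · show t - 2 ≤ t; linarith
    · show (-1:ℝ) ≤ t; linarith
    · show (0:ℝ) ≤ t; linarith
  · show max (t - 2 + 2) 0 + max (-1 + 1) 0 ≤ t
    rw [max_eq_left (by linarith), show ((-1:ℝ) + 1) = 0 by norm_num, max_self]
    linarith
  · show max (t - 2 + 2) 0 + 5 * max (0:ℝ) 0 ≤ t
    rw [max_eq_left (by linarith), max_self]
    linarith

lemma mem2 (t : ℝ) (h1 : 1 ≤ t) :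
    ![(t-3)/2, (t-3)/2, (t-1)/10] ∈ admissible 3 2 h17 G17 t := by
  rw [admissible_iff]
  refine ⟨?_, ?_, ?_⟩
  · intro i; fin_cases i
    · show (t-3)/2 ≤ t; linarith
    · show (t-3)/2 ≤ t; linarith
    · show (t-1)/10 ≤ t; linarith
  · show max ((t-3)/2 + 2) 0 + max ((t-3)/2 + 1) 0 ≤ t
    rw [max_eq_left (by linarith), max_eq_left (by linarith)]
    linarith
  · show max ((t-3)/2 + 2) 0 + 5 * max ((t-1)/10) 0 ≤ t
    rw [max_eq_left (by linarith), max_eq_left (by linarith)]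
    linarith

lemma mem3 (t : ℝ) (h1 : 7/2 ≤ t) :
    ![t/6 - 1/3, 5*t/6 - 8/3, t/6 - 1/3] ∈ admissible 3 2 h17 G17 t := by
  rw [admissible_iff]
  refine ⟨?_, ?_, ?_⟩
  · intro i; fin_cases i
    · show t/6 - 1/3 ≤ t; linarith
    · show 5*t/6 - 8/3 ≤ t; linarith
    · show t/6 - 1/3 ≤ t; linarith
  · show max (t/6 - 1/3 + 2) 0 + max (5*t/6 - 8/3 + 1) 0 ≤ t
    rw [max_eq_left (by linarith), max_eq_left (by linarith)]
    linarith
  · show max (t/6 - 1/3 + 2) 0 + 5 * max (t/6 - 1/3) 0 ≤ t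
    rw [max_eq_left (by linarith), max_eq_left (by linarith)]
    linarith

noncomputable def gfun : ℝ → Fin 3 → ℝ := fun t =>
  ![min (t - 2) (min ((t-3)/2) (t/6 - 1/3)),
    max (-1) (max ((t-3)/2) (5*t/6 - 8/3)),
    max 0 (max ((t-1)/10) (t/6 - 1/3))]

/-- Example 2 of the paper: explicit formulas for `F(t)` in all
three time regimes, together with continuity and monotonicity of `F`. -/
theorem F_example_threeRoutes
    (F : ℝ → Fin 3 → ℝ)
    (hF : ∀ t : ℝ, 0 ≤ t → IsGreatestMS 3 2 h17 G17 t (F t)) :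
    (∀ t : ℝ, 0 ≤ t → t ≤ 1 →
      F t 0 = t - 2 ∧ F t 1 = -1 ∧ F t 2 = 0) ∧
    (∀ t : ℝ, 1 ≤ t → t ≤ 7 / 2 →
      F t 0 = (t - 3) / 2 ∧ F t 1 = (t - 3) / 2 ∧ F t 2 = (t - 1) / 10) ∧
    (∀ t : ℝ, 7 / 2 ≤ t →
      F t 0 = t / 6 - 1 / 3 ∧ F t 1 = 5 * t / 6 - 8 / 3 ∧ F t 2 = t / 6 - 1 / 3) ∧
    ContinuousOn F (Set.Ici 0) ∧
    (∀ s t : ℝ, 0 ≤ s → s ≤ t → ∀ i, F s i ≤ F t i) := by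
  have key1 : ∀ t : ℝ, 0 ≤ t → t < 1 → F t = ![t - 2, -1, 0] := fun t h0 h1 =>
    uniq1 t h0 h1 (F t) (hF t h0).1 ((hF t h0).2 _ (mem1 t h0 h1.le))
  have key2 : ∀ t : ℝ, 1 ≤ t → t < 7/2 → F t = ![(t-3)/2, (t-3)/2, (t-1)/10] := fun t h1 h2 =>
    uniq2 t h1 h2 (F t) (hF t (by linarith)).1 ((hF t (by linarith)).2 _ (mem2 t h1))
  have key3 : ∀ t : ℝ, 7/2 ≤ t → F t = ![t/6 - 1/3, 5*t/6 - 8/3, t/6 - 1/3] := fun t h1 =>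
    uniq3 t h1 (F t) (hF t (by linarith)).1 ((hF t (by linarith)).2 _ (mem3 t h1))
  have hg : ∀ t : ℝ, 0 ≤ t → F t = gfun t := by
    intro t h0
    rcases lt_or_ge t 1 with h1 | h1
    · rw [key1 t h0 h1]
      funext i
      fin_cases i
      · show t - 2 = min (t - 2) (min ((t-3)/2) (t/6 - 1/3))
        rw [min_eq_left (le_min (by linarith) (by linarith))]
      · show (-1:ℝ) = max (-1) (max ((t-3)/2) (5*t/6 - 8/3))
        rw [max_eq_left (max_le (by linarith) (by linarith))]
      · show (0:ℝ) = max 0 (max ((t-1)/10) (t/6 - 1/3))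
        rw [max_eq_left (max_le (by linarith) (by linarith))]
    · rcases lt_or_ge t (7/2) with h2 | h2
      · rw [key2 t h1 h2]
        funext i
        fin_cases i
        · show (t-3)/2 = min (t - 2) (min ((t-3)/2) (t/6 - 1/3))
          rw [min_eq_left (show (t-3)/2 ≤ t/6 - 1/3 by linarith),
            min_eq_right (show (t-3)/2 ≤ t - 2 by linarith)]
        · show (t-3)/2 = max (-1) (max ((t-3)/2) (5*t/6 - 8/3))
          rw [max_eq_left (show 5*t/6 - 8/3 ≤ (t-3)/2 by linarith),
            max_eq_right (show (-1:ℝ) ≤ (t-3)/2 by linarith)]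
        · show (t-1)/10 = max 0 (max ((t-1)/10) (t/6 - 1/3))
          rw [max_eq_left (show t/6 - 1/3 ≤ (t-1)/10 by linarith),
            max_eq_right (show (0:ℝ) ≤ (t-1)/10 by linarith)]
      · rw [key3 t h2]
        funext i
        fin_cases i
        · show t/6 - 1/3 = min (t - 2) (min ((t-3)/2) (t/6 - 1/3))
          rw [min_eq_right (show t/6 - 1/3 ≤ (t-3)/2 by linarith),
            min_eq_right (show t/6 - 1/3 ≤ t - 2 by linarith)]
        · show 5*t/6 - 8/3 = max (-1) (max ((t-3)/2) (5*t/6 - 8/3))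
          rw [max_eq_right (show (t-3)/2 ≤ 5*t/6 - 8/3 by linarith),
            max_eq_right (show (-1:ℝ) ≤ 5*t/6 - 8/3 by linarith)]
        · show t/6 - 1/3 = max 0 (max ((t-1)/10) (t/6 - 1/3))
          rw [max_eq_right (show (t-1)/10 ≤ t/6 - 1/3 by linarith),
            max_eq_right (show (0:ℝ) ≤ t/6 - 1/3 by linarith)]
  refine ⟨?_, ?_, ?_, ?_, ?_⟩
  · intro t h0 h1
    rcases lt_or_eq_of_le h1 with h1 | h1
    · rw [key1 t h0 h1]
      exact ⟨rfl, rfl, rfl⟩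
    · subst h1
      rw [key2 1 le_rfl (by norm_num)]
      refine ⟨?_, ?_, ?_⟩ <;> norm_num <;> rfl
  · intro t h1 h2
    rcases lt_or_eq_of_le h2 with h2 | h2
    · rw [key2 t h1 h2]
      exact ⟨rfl, rfl, rfl⟩
    · subst h2
      rw [key3 (7/2) le_rfl]
      refine ⟨?_, ?_, ?_⟩ <;> norm_num <;> rfl
  · intro t h1
    rw [key3 t h1]
    exact ⟨rfl, rfl, rfl⟩
  · have hgc : Continuous gfun := by
      apply continuous_pi
      intro i
      fin_cases i
      · show Continuous fun t : ℝ => min (t - 2) (min ((t-3)/2) (t/6 - 1/3))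
        fun_prop
      · show Continuous fun t : ℝ => max (-1) (max ((t-3)/2) (5*t/6 - 8/3))
        fun_prop
      · show Continuous fun t : ℝ => max 0 (max ((t-1)/10) (t/6 - 1/3))
        fun_prop
    exact ContinuousOn.congr hgc.continuousOn (fun t ht => hg t ht)
  · intro s t hs hst i
    rw [hg s hs, hg t (le_trans hs hst)]
    fin_cases i
    · show min (s - 2) (min ((s-3)/2) (s/6 - 1/3)) ≤ min (t - 2) (min ((t-3)/2) (t/6 - 1/3))
      exact min_le_min (by linarith) (min_le_min (by linarith) (by linarith))
    · show max (-1:ℝ) (max ((s-3)/2) (5*s/6 - 8/3)) ≤ max (-1) (max ((t-3)/2) (5*t/6 - 8/3))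
      exact max_le_max le_rfl (max_le_max (by linarith) (by linarith))
    · show max (0:ℝ) (max ((s-1)/10) (s/6 - 1/3)) ≤ max 0 (max ((t-1)/10) (t/6 - 1/3))
      exact max_le_max le_rfl (max_le_max (by linarith) (by linarith))
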